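/- Let l ≥ 3 and ν : ZMod l → ℤ × ℤ encode a smooth complete fan in ℤ², let u ∈ ℤ × ℤ, and let i₀ ∈ ZMod l satisfy ⟨ν i₀, u⟩ = −1. Set S_u = {i ∈ ZMod l : ⟨ν i, u⟩ < 0}. Then the number of connected components of the cyclic adjacency graph on S_u \ {i₀} equals the number of elements of {i₀ − 1, i₀ + 1} lying in S_u. This is the n = 2 case of the paper's Lemma: the graph Γ_{i₀}(u) has the same number of connected components as its subgraph Γ_{i₀}°(u) induced on the rays sharing a cone with ρ_{i₀}. -/

import Mathlib

/-- The pairing ⟨v, u⟩ = v.1 * u.1 + v.2 * u.2 between N = ℤ² and M = ℤ². -/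
def pairing (v u : ℤ × ℤ) : ℤ := v.1 * u.1 + v.2 * u.2

/-- det(v, w) = v.1 * w.2 − v.2 * w.1. -/
def det2 (v w : ℤ × ℤ) : ℤ := v.1 * w.2 - v.2 * w.1

/-- View a lattice point in ℚ². -/
def toQ (v : ℤ × ℤ) : ℚ × ℚ := ((v.1 : ℚ), (v.2 : ℚ))

/-- The closed cone spanned by a and b. -/
def closedCone (a b : ℤ × ℤ) : Set (ℚ × ℚ) :=
  {x | ∃ s t : ℚ, 0 ≤ s ∧ 0 ≤ t ∧ x = s • toQ a + t • toQ b}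

/-- The open cone spanned by a and b. -/
def openCone (a b : ℤ × ℤ) : Set (ℚ × ℚ) :=
  {x | ∃ s t : ℚ, 0 < s ∧ 0 < t ∧ x = s • toQ a + t • toQ b}

/-- ν : ZMod l → ℤ × ℤ encodes a smooth complete fan in ℤ²:
(i) each successive pair of ray generators has determinant 1;
(ii) the closed two-dimensional cones cover ℚ²;
(iii) the open two-dimensional cones are pairwise disjoint. -/
structure IsSmoothCompleteFan {l : ℕ} (ν : ZMod l → ℤ × ℤ) : Prop where
  det_one : ∀ i : ZMod l, det2 (ν i) (ν (i + 1)) = 1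
  covers : ∀ x : ℚ × ℚ, ∃ i : ZMod l, x ∈ closedCone (ν i) (ν (i + 1))
  disjointOpen : ∀ i j : ZMod l, i ≠ j →
    Disjoint (openCone (ν i) (ν (i + 1))) (openCone (ν j) (ν (j + 1)))

/-- The cycle graph on ZMod l: distinct j, k are adjacent iff k = j + 1 or j = k + 1. -/
def cycleGraph (l : ℕ) : SimpleGraph (ZMod l) where
  Adj j k := j ≠ k ∧ (k = j + 1 ∨ j = k + 1)
  symm := by
    constructor
    intro a b h
    exact ⟨h.1.symm, h.2.symm⟩
  loopless := by
    constructor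
    intro a h
    exact h.1 rfl

/-! ### Auxiliary algebraic identities -/

lemma key1 (A B u : ℤ × ℤ) (h : det2 A B = 1) :
    -(pairing B u) * A.1 + pairing A u * B.1 = -u.2 := by
  simp only [pairing, det2] at *; linear_combination (-u.2) * h

lemma key2 (A B u : ℤ × ℤ) (h : det2 A B = 1) :
    -(pairing B u) * A.2 + pairing A u * B.2 = u.1 := by
  simp only [pairing, det2] at *; linear_combination (u.1) * h

lemma key3 (A B u : ℤ × ℤ) (h : det2 A B = 1) :
    det2 u B * A.1 + det2 A u * B.1 = u.1 := by
  simp only [pairing, det2] at *; linear_combination (u.1) * h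

lemma key4 (A B u : ℤ × ℤ) (h : det2 A B = 1) :
    det2 u B * A.2 + det2 A u * B.2 = u.2 := by
  simp only [pairing, det2] at *; linear_combination (u.2) * h

lemma key5 (A B u : ℤ × ℤ) (h : det2 A B = 1) :
    det2 A u = pairing B u * (A.1^2 + A.2^2) - pairing A u * (A.1*B.1 + A.2*B.2) := by
  simp only [pairing, det2] at *; linear_combination (-(A.1*u.2 - A.2*u.1)) * h

lemma key6 (A B : ℤ × ℤ) (h : det2 A B = 1) : 1 ≤ A.1^2 + A.2^2 := by
  rcases eq_or_ne A.1 0 with h1 | h1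
  · rcases eq_or_ne A.2 0 with h2 | h2
    · simp [det2, h1, h2] at h
    · have h3 : 1 ≤ |A.2| := Int.one_le_abs h2
      nlinarith [sq_nonneg A.1, sq_abs A.2]
  · have h3 : 1 ≤ |A.1| := Int.one_le_abs h1
    nlinarith [sq_nonneg A.2, sq_abs A.1]

/-- At a sign transition, the cone contains a family of perturbed boundary points. -/
lemma transition_mem (A B u : ℤ × ℤ) (h : det2 A B = 1)
    (ha : 0 ≤ pairing A u) (hb : pairing B u < 0) :
    ∃ ε : ℚ, 0 < ε ∧ ∀ δ : ℚ, 0 < δ → δ < ε →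
      ((((-u.2 : ℤ) : ℚ), ((u.1 : ℤ) : ℚ)) - δ • toQ u) ∈ openCone A B := by
  set c : ℤ := det2 u B with hc
  set d : ℤ := det2 A u with hd
  set den : ℚ := 1 + |(c : ℚ)| + |(d : ℚ)| with hden
  have hden0 : (0 : ℚ) < den := by positivity
  refine ⟨1 / den, by positivity, ?_⟩
  intro δ hδ hδε
  rw [lt_div_iff₀ hden0] at hδε
  have hexp : δ * den = δ + δ * |(c:ℚ)| + δ * |(d:ℚ)| := by rw [hden]; ring
  have hδc : δ * (c:ℚ) ≤ δ * |(c:ℚ)| := by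
    exact mul_le_mul_of_nonneg_left (le_abs_self _) hδ.le
  have hδd' : δ * (d:ℚ) ≤ δ * |(d:ℚ)| := by
    exact mul_le_mul_of_nonneg_left (le_abs_self _) hδ.le
  have hδabsd : 0 ≤ δ * |(d:ℚ)| := by positivity
  have hδabsc : 0 ≤ δ * |(c:ℚ)| := by positivity
  have hb1 : pairing B u ≤ -1 := by omega
  have hbQ : ((pairing B u : ℤ) : ℚ) ≤ -1 := by exact_mod_cast hb1
  have hs : 0 < (-(pairing B u) : ℚ) - δ * c := by
    linarith
  have ht : 0 < ((pairing A u : ℤ) : ℚ) - δ * d := by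
    rcases eq_or_lt_of_le ha with ha0 | ha1
    · have hd5 := key5 A B u h
      have h6 := key6 A B h
      have hdneg : d ≤ -1 := by
        rw [hd, hd5, ← ha0]
        nlinarith
      have : ((d:ℤ):ℚ) ≤ -1 := by exact_mod_cast hdneg
      have h0 : ((pairing A u : ℤ) : ℚ) = 0 := by exact_mod_cast ha0.symm
      nlinarith
    · have haQ : (1 : ℚ) ≤ ((pairing A u : ℤ) : ℚ) := by exact_mod_cast ha1
      linarith
  refine ⟨_, _, hs, ht, ?_⟩
  have k1 : ((-(pairing B u) : ℤ) : ℚ) * A.1 + ((pairing A u : ℤ) : ℚ) * B.1 = -u.2 := by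
    exact_mod_cast key1 A B u h
  have k2 : ((-(pairing B u) : ℤ) : ℚ) * A.2 + ((pairing A u : ℤ) : ℚ) * B.2 = u.1 := by
    exact_mod_cast key2 A B u h
  have k3 : ((c : ℤ) : ℚ) * A.1 + ((d : ℤ) : ℚ) * B.1 = u.1 := by exact_mod_cast key3 A B u h
  have k4 : ((c : ℤ) : ℚ) * A.2 + ((d : ℤ) : ℚ) * B.2 = u.2 := by exact_mod_cast key4 A B u h
  rw [Prod.ext_iff]
  constructor
  · show ((-u.2 : ℤ) : ℚ) - δ * (u.1 : ℚ) = _ * (A.1 : ℚ) + _ * (B.1 : ℚ)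
    push_cast at k1 k3 ⊢
    linear_combination δ * k3 - k1
  · show ((u.1 : ℤ) : ℚ) - δ * (u.2 : ℚ) = _ * (A.2 : ℚ) + _ * (B.2 : ℚ)
    push_cast
    push_cast at k2 k4
    linear_combination δ * k4 - k2

lemma one_ne_zero_zmod {l : ℕ} (hl : 3 ≤ l) : (1 : ZMod l) ≠ 0 := by
  haveI : NeZero l := ⟨by omega⟩
  intro h
  have h' : ((1 : ℕ) : ZMod l) = 0 := by exact_mod_cast h
  rw [ZMod.natCast_eq_zero_iff] at h'
  have := Nat.le_of_dvd one_pos h'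
  omega

lemma two_ne_zero_zmod {l : ℕ} (hl : 3 ≤ l) : (2 : ZMod l) ≠ 0 := by
  haveI : NeZero l := ⟨by omega⟩
  intro h
  have h' : ((2 : ℕ) : ZMod l) = 0 := by exact_mod_cast h
  rw [ZMod.natCast_eq_zero_iff] at h'
  have := Nat.le_of_dvd two_pos h'
  omega

lemma induce_adj' {l : ℕ} (T : Set (ZMod l)) (a b : ↥T)
    (h : (cycleGraph l).Adj a.1 b.1) : ((cycleGraph l).induce T).Adj a b := h

/-- Number of connected components of the induced subgraph of the cycle graph on a proper
subset equals the number of "left endpoints". -/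
lemma comp_card {l : ℕ} (hl : 3 ≤ l) (T : Set (ZMod l)) (q : ZMod l) (hq : q ∉ T) :
    Nat.card ((cycleGraph l).induce T).ConnectedComponent
      = {i | i ∈ T ∧ i - 1 ∉ T}.ncard := by
  classical
  haveI : NeZero l := ⟨by omega⟩
  have h10 : (1 : ZMod l) ≠ 0 := one_ne_zero_zmod hl
  have hex : ∀ v : ZMod l, ∃ k : ℕ, v - ((k + 1 : ℕ) : ZMod l) ∉ T := by
    intro v
    refine ⟨(v - q - 1).val, ?_⟩
    have hcast : (((v - q - 1).val + 1 : ℕ) : ZMod l) = v - q := by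
      push_cast [ZMod.natCast_val, ZMod.cast_id]
      ring
    rw [hcast, sub_sub_cancel]
    exact hq
  let K : ZMod l → ℕ := fun v => Nat.find (hex v)
  let lep : ZMod l → ZMod l := fun v => v - ((K v : ℕ) : ZMod l)
  have P1 : ∀ v : ZMod l, v - ((K v + 1 : ℕ) : ZMod l) ∉ T := fun v => Nat.find_spec (hex v)
  have P2 : ∀ v : ZMod l, v ∈ T → ∀ j : ℕ, j ≤ K v → v - ((j : ℕ) : ZMod l) ∈ T := by
    intro v hv j hj
    match j with
    | 0 => simpa using hv
    | (m+1) =>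
      have hm : m < Nat.find (hex v) := hj
      have := Nat.find_min (hex v) hm
      simpa using this
  have P3 : ∀ v : ZMod l, v ∈ T → v + 1 ∈ T → K (v + 1) = K v + 1 := by
    intro v hv hv1
    show Nat.find (hex (v + 1)) = K v + 1
    rw [Nat.find_eq_iff]
    constructor
    · have he : (v + 1) - ((K v + 1 + 1 : ℕ) : ZMod l) = v - ((K v + 1 : ℕ) : ZMod l) := by
        push_cast; ring
      rw [he]
      exact P1 v
    · intro n hn
      rw [not_not]
      match n with
      | 0 =>
        have he : (v + 1) - ((0 + 1 : ℕ) : ZMod l) = v := by push_cast; ring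
        rw [he]; exact hv
      | (m+1) =>
        have hm : m + 1 ≤ K v := by omega
        have hmem := P2 v hv (m+1) hm
        have he : (v + 1) - ((m + 1 + 1 : ℕ) : ZMod l) = v - ((m + 1 : ℕ) : ZMod l) := by
          push_cast; ring
        rw [he]
        exact hmem
  have lep_mem : ∀ v : ZMod l, v ∈ T → lep v ∈ T := fun v hv => P2 v hv (K v) le_rfl
  have lep_pred : ∀ v : ZMod l, lep v - 1 ∉ T := by
    intro v
    have he : lep v - 1 = v - ((K v + 1 : ℕ) : ZMod l) := by
      show v - ((K v : ℕ) : ZMod l) - 1 = _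
      push_cast; ring
    rw [he]; exact P1 v
  have P4 : ∀ v : ZMod l, v ∈ T → v + 1 ∈ T → lep (v + 1) = lep v := by
    intro v hv hv1
    show (v + 1) - ((K (v + 1) : ℕ) : ZMod l) = v - ((K v : ℕ) : ZMod l)
    rw [P3 v hv hv1]
    push_cast; ring
  set G := (cycleGraph l).induce T with hG
  have adj_inv : ∀ a b : ↥T, G.Adj a b → lep ↑a = lep ↑b := by
    intro a b hab
    have hab' : (cycleGraph l).Adj a.1 b.1 := hab
    obtain ⟨hne, h1 | h1⟩ := hab'
    · rw [h1]; exact (P4 a.1 a.2 (h1 ▸ b.2)).symm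
    · rw [h1]; exact P4 b.1 b.2 (h1 ▸ a.2)
  have reach : ∀ (v : ZMod l) (hv : v ∈ T) (j : ℕ) (hj : j ≤ K v),
      G.Reachable ⟨v, hv⟩ ⟨v - ((j : ℕ) : ZMod l), P2 v hv j hj⟩ := by
    intro v hv j
    induction j with
    | zero =>
      intro hj
      have he : (⟨v - ((0 : ℕ) : ZMod l), P2 v hv 0 hj⟩ : ↥T) = ⟨v, hv⟩ :=
        Subtype.ext (by push_cast; ring)
      rw [he]
    | succ m ih =>
      intro hj
      have hm : m ≤ K v := by omega
      have hmem1 := P2 v hv m hm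
      have hmem2 := P2 v hv (m+1) hj
      have hadj : (cycleGraph l).Adj (v - ((m : ℕ) : ZMod l)) (v - ((m + 1 : ℕ) : ZMod l)) := by
        constructor
        · intro hcon
          apply h10
          have h2 : v - ((m : ℕ) : ZMod l) - (v - ((m + 1 : ℕ) : ZMod l)) = 1 := by
            push_cast; ring
          rw [hcon] at h2
          simpa using h2.symm
        · right; push_cast; ring
      exact (ih hm).trans
        (SimpleGraph.Adj.reachable (induce_adj' T ⟨_, hmem1⟩ ⟨_, hmem2⟩ hadj))
  have reach_lep : ∀ (v : ZMod l) (hv : v ∈ T),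
      G.connectedComponentMk ⟨lep v, lep_mem v hv⟩ = G.connectedComponentMk ⟨v, hv⟩ := by
    intro v hv
    exact (SimpleGraph.ConnectedComponent.sound (reach v hv (K v) le_rfl)).symm
  have lep_in_LE : ∀ v : ZMod l, v ∈ T → lep v ∈ {i | i ∈ T ∧ i - 1 ∉ T} :=
    fun v hv => ⟨lep_mem v hv, lep_pred v⟩
  have lep_fix : ∀ i : ZMod l, i ∈ T → i - 1 ∉ T → lep i = i := by
    intro i hi hi'
    have hK0 : K i = 0 := by
      show Nat.find (hex i) = 0
      rw [Nat.find_eq_zero]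
      simpa using hi'
    show i - ((K i : ℕ) : ZMod l) = i
    rw [hK0]
    push_cast; ring
  have walk_inv : ∀ (a b : ↥T), G.Walk a b → lep a.1 = lep b.1 := by
    intro a b p
    induction p with
    | nil => rfl
    | cons h _ ih => exact (adj_inv _ _ h).trans ih
  have e : G.ConnectedComponent ≃ ↥{i | i ∈ T ∧ i - 1 ∉ T} := by
    refine ⟨fun c => c.lift (fun v : ↥T => (⟨lep v.1, lep_in_LE v.1 v.2⟩ : ↥{i | i ∈ T ∧ i - 1 ∉ T}))
        (fun a b p _ => Subtype.ext (walk_inv a b p)),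
      fun i => G.connectedComponentMk ⟨↑i, i.2.1⟩, ?_, ?_⟩
    · intro c
      refine SimpleGraph.ConnectedComponent.ind (fun v => ?_) c
      simp only [SimpleGraph.ConnectedComponent.lift_mk]
      exact reach_lep ↑v v.2
    · intro i
      apply Subtype.ext
      simp only [SimpleGraph.ConnectedComponent.lift_mk]
      exact lep_fix ↑i i.2.1 i.2.2
  rw [Nat.card_congr e, Nat.card_coe_set_eq]

/-- First entry into a set along the cycle. -/
lemma exists_entry {l : ℕ} (hl : 3 ≤ l) (S : Set (ZMod l)) (p q : ZMod l)
    (hp : p ∈ S) (hq : q ∉ S) : ∃ i, i ∈ S ∧ i - 1 ∉ S := by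
  classical
  haveI : NeZero l := ⟨by omega⟩
  have hex : ∃ n : ℕ, q + ((n + 1 : ℕ) : ZMod l) ∈ S := by
    refine ⟨(p - q - 1).val, ?_⟩
    have hcast : (((p - q - 1).val + 1 : ℕ) : ZMod l) = p - q := by
      push_cast [ZMod.natCast_val, ZMod.cast_id]
      ring
    rw [hcast, add_sub_cancel]
    exact hp
  set n := Nat.find hex with hn
  refine ⟨q + ((n + 1 : ℕ) : ZMod l), Nat.find_spec hex, ?_⟩
  have he : q + ((n + 1 : ℕ) : ZMod l) - 1 = q + ((n : ℕ) : ZMod l) := by push_cast; ring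
  rw [he]
  match hm : n with
  | 0 => simpa using hq
  | (m+1) =>
    have := Nat.find_min hex (show m < n by omega)
    simpa using this

theorem components_eq_neighbors_count (l : ℕ) (hl : 3 ≤ l) (ν : ZMod l → ℤ × ℤ)
    (hfan : IsSmoothCompleteFan ν) (u : ℤ × ℤ) (i₀ : ZMod l)
    (hi₀ : pairing (ν i₀) u = -1) :
    Nat.card ((cycleGraph l).induce
        ({i : ZMod l | pairing (ν i) u < 0} \ {i₀})).ConnectedComponent =
      (({i₀ - 1, i₀ + 1} : Set (ZMod l)) ∩ {i : ZMod l | pairing (ν i) u < 0}).ncard := by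
  classical
  haveI : NeZero l := ⟨by omega⟩
  have h10 : (1 : ZMod l) ≠ 0 := one_ne_zero_zmod hl
  set S : Set (ZMod l) := {i : ZMod l | pairing (ν i) u < 0} with hS
  have hi₀S : i₀ ∈ S := by rw [hS]; simp only [Set.mem_setOf_eq, hi₀]; omega
  have hu : u ≠ 0 := by
    intro h
    rw [h] at hi₀
    simp [pairing] at hi₀
  -- some ray has nonnegative pairing
  have hnonneg : ∃ j, 0 ≤ pairing (ν j) u := by
    by_contra hcon
    push_neg at hcon
    obtain ⟨j, s, t, hs, ht, hx⟩ := hfan.covers (toQ u)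
    rw [Prod.ext_iff] at hx
    obtain ⟨hx1, hx2⟩ := hx
    simp only [toQ, Prod.fst_add, Prod.snd_add, Prod.smul_fst, Prod.smul_snd, smul_eq_mul] at hx1 hx2
    have keyq : ((u.1 : ℚ))^2 + ((u.2 : ℚ))^2
        = s * ((pairing (ν j) u : ℤ) : ℚ) + t * ((pairing (ν (j+1)) u : ℤ) : ℚ) := by
      simp only [pairing]
      push_cast
      linear_combination (u.1 : ℚ) * hx1 + (u.2 : ℚ) * hx2
    have h1 : ((pairing (ν j) u : ℤ) : ℚ) < 0 := by exact_mod_cast hcon j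
    have h2 : ((pairing (ν (j+1)) u : ℤ) : ℚ) < 0 := by exact_mod_cast hcon (j+1)
    have hL : 0 < ((u.1 : ℚ))^2 + ((u.2 : ℚ))^2 := by
      have hne : u.1 ≠ 0 ∨ u.2 ≠ 0 := by
        by_contra h
        push_neg at h
        exact hu (Prod.ext h.1 h.2)
      rcases hne with h | h
      · have h1 : (u.1 : ℚ) ≠ 0 := Int.cast_ne_zero.mpr h
        have h2 : 0 < (u.1 : ℚ)^2 := lt_of_le_of_ne (sq_nonneg _) (Ne.symm (pow_ne_zero 2 h1))
        nlinarith [sq_nonneg (u.2 : ℚ)]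
      · have h1 : (u.2 : ℚ) ≠ 0 := Int.cast_ne_zero.mpr h
        have h2 : 0 < (u.2 : ℚ)^2 := lt_of_le_of_ne (sq_nonneg _) (Ne.symm (pow_ne_zero 2 h1))
        nlinarith [sq_nonneg (u.1 : ℚ)]
    nlinarith [mul_nonneg hs (le_of_lt (neg_pos.mpr h1)), mul_nonneg ht (le_of_lt (neg_pos.mpr h2))]
  obtain ⟨j₀, hj₀⟩ := hnonneg
  have hj₀S : j₀ ∉ S := by rw [hS]; simp only [Set.mem_setOf_eq]; omega
  -- uniqueness of entries
  have hentry_unique : ∀ x y : ZMod l, x ∈ S → x - 1 ∉ S → y ∈ S → y - 1 ∉ S → x = y := by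
    intro x y hx hx' hy hy'
    by_contra hxy
    have hxd : x - 1 ≠ y - 1 := fun h => hxy (by linear_combination h)
    have hax : 0 ≤ pairing (ν (x - 1)) u := le_of_not_gt hx'
    have hbx : pairing (ν (x - 1 + 1)) u < 0 := by rwa [sub_add_cancel]
    have hay : 0 ≤ pairing (ν (y - 1)) u := le_of_not_gt hy'
    have hby : pairing (ν (y - 1 + 1)) u < 0 := by rwa [sub_add_cancel]
    obtain ⟨ε1, hε1, H1⟩ := transition_mem (ν (x-1)) (ν (x-1+1)) u (hfan.det_one (x-1)) hax hbx
    obtain ⟨ε2, hε2, H2⟩ := transition_mem (ν (y-1)) (ν (y-1+1)) u (hfan.det_one (y-1)) hay hby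
    set δ : ℚ := min ε1 ε2 / 2 with hδdef
    have hδ0 : 0 < δ := by positivity
    have hδ1 : δ < ε1 := lt_of_lt_of_le (half_lt_self (lt_min hε1 hε2)) (min_le_left _ _)
    have hδ2 : δ < ε2 := lt_of_lt_of_le (half_lt_self (lt_min hε1 hε2)) (min_le_right _ _)
    exact (Set.disjoint_left.mp (hfan.disjointOpen (x-1) (y-1) hxd)
      (H1 δ hδ0 hδ1)) (H2 δ hδ0 hδ2)
  obtain ⟨i₁, hi₁S, hi₁p⟩ := exists_entry hl S i₀ j₀ hi₀S hj₀S
  have hKey : ∀ x : ZMod l, x ∈ S → x - 1 ∉ S → x = i₁ :=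
    fun x hx hx' => hentry_unique x i₁ hx hx' hi₁S hi₁p
  -- rewrite LHS
  have hTq : j₀ ∉ S \ {i₀} := fun h => hj₀S h.1
  rw [comp_card hl (S \ {i₀}) j₀ hTq]
  have hii : i₀ + 1 ≠ i₀ := fun h => h10 (by linear_combination h)
  have hmm : i₀ - 1 ≠ i₀ + 1 := fun h => two_ne_zero_zmod hl (by linear_combination -h)
  have hsub : ∀ i : ZMod l, i - 1 = i₀ ↔ i = i₀ + 1 := fun i => sub_eq_iff_eq_add
  -- characterize left endpoints of T
  by_cases hA : i₀ - 1 ∈ S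
  · have hB : i₁ ≠ i₀ := by
      intro h
      rw [h] at hi₁p
      exact hi₁p hA
    have hB1 : i₁ ≠ i₀ + 1 := by
      intro h
      apply hi₁p
      rw [h, add_sub_cancel_right]
      exact hi₀S
    by_cases hC : i₀ + 1 ∈ S
    · have hLEeq : {i | i ∈ S \ {i₀} ∧ i - 1 ∉ S \ {i₀}} = {i₁, i₀ + 1} := by
        ext i
        simp only [Set.mem_setOf_eq, Set.mem_diff, Set.mem_singleton_iff, Set.mem_insert_iff,
          not_and, not_not]
        constructor
        · rintro ⟨⟨hiS, hine⟩, hpred⟩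
          by_cases hp : i - 1 ∈ S
          · right
            rw [← hsub i]
            exact hpred hp
          · left
            exact hKey i hiS hp
        · rintro (rfl | rfl)
          · exact ⟨⟨hi₁S, hB⟩, fun h => absurd h hi₁p⟩
          · refine ⟨⟨hC, hii⟩, fun _ => ?_⟩
            rw [add_sub_cancel_right]
      have hRHSeq : ({i₀ - 1, i₀ + 1} : Set (ZMod l)) ∩ S = {i₀ - 1, i₀ + 1} := by
        rw [Set.inter_eq_left]
        rintro x (rfl | rfl)
        · exact hA
        · exact hC
      rw [hLEeq, hRHSeq, Set.ncard_pair hB1, Set.ncard_pair hmm]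
    · have hLEeq : {i | i ∈ S \ {i₀} ∧ i - 1 ∉ S \ {i₀}} = {i₁} := by
        ext i
        simp only [Set.mem_setOf_eq, Set.mem_diff, Set.mem_singleton_iff, not_and, not_not]
        constructor
        · rintro ⟨⟨hiS, hine⟩, hpred⟩
          by_cases hp : i - 1 ∈ S
          · exfalso
            apply hC
            have h1 : i = i₀ + 1 := (hsub i).mp (hpred hp)
            rwa [h1] at hiS
          · exact hKey i hiS hp
        · rintro rfl
          exact ⟨⟨hi₁S, hB⟩, fun h => absurd h hi₁p⟩
      have hRHSeq : ({i₀ - 1, i₀ + 1} : Set (ZMod l)) ∩ S = {i₀ - 1} := by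
        ext x
        simp only [Set.mem_inter_iff, Set.mem_insert_iff, Set.mem_singleton_iff]
        constructor
        · rintro ⟨rfl | rfl, hxS⟩
          · rfl
          · exact absurd hxS hC
        · rintro rfl
          exact ⟨Or.inl rfl, hA⟩
      rw [hLEeq, hRHSeq, Set.ncard_singleton, Set.ncard_singleton]
  · have hA1 : i₁ = i₀ := (hKey i₀ hi₀S hA).symm
    by_cases hC : i₀ + 1 ∈ S
    · have hLEeq : {i | i ∈ S \ {i₀} ∧ i - 1 ∉ S \ {i₀}} = {i₀ + 1} := by
        ext i
        simp only [Set.mem_setOf_eq, Set.mem_diff, Set.mem_singleton_iff, not_and, not_not]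
        constructor
        · rintro ⟨⟨hiS, hine⟩, hpred⟩
          by_cases hp : i - 1 ∈ S
          · rw [← hsub i]
            exact hpred hp
          · exact absurd ((hKey i hiS hp).trans hA1) hine
        · rintro rfl
          refine ⟨⟨hC, hii⟩, fun _ => ?_⟩
          rw [add_sub_cancel_right]
      have hRHSeq : ({i₀ - 1, i₀ + 1} : Set (ZMod l)) ∩ S = {i₀ + 1} := by
        ext x
        simp only [Set.mem_inter_iff, Set.mem_insert_iff, Set.mem_singleton_iff]
        constructor
        · rintro ⟨rfl | rfl, hxS⟩
          · exact absurd hxS hA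
          · rfl
        · rintro rfl
          exact ⟨Or.inr rfl, hC⟩
      rw [hLEeq, hRHSeq]
    · have hLEeq : {i | i ∈ S \ {i₀} ∧ i - 1 ∉ S \ {i₀}} = (∅ : Set (ZMod l)) := by
        ext i
        simp only [Set.mem_empty_iff_false, iff_false]
        rintro ⟨⟨hiS, hine⟩, hpred⟩
        rw [Set.mem_diff, Set.mem_singleton_iff, not_and, not_not] at hpred
        by_cases hp : i - 1 ∈ S
        · apply hC
          have h1 : i = i₀ + 1 := (hsub i).mp (hpred hp)
          rwa [h1] at hiS
        · exact hine ((hKey i hiS hp).trans hA1)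
      have hRHSeq : ({i₀ - 1, i₀ + 1} : Set (ZMod l)) ∩ S = (∅ : Set (ZMod l)) := by
        ext x
        simp only [Set.mem_inter_iff, Set.mem_insert_iff, Set.mem_empty_iff_false, iff_false]
        rintro ⟨rfl | rfl, hxS⟩
        · exact hA hxS
        · exact hC hxS
      rw [hLEeq, hRHSeq]
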